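/- Let P ∈ ℝ^{n×n} satisfy the entrywise decay bound |P_{ij}| ≤ C·e^{−α|i−j|} for all i,j, where C > 0 and α > 0. For an integer m ≥ 0, let P^{(m)} be the matrix of bandwidth m obtained from P by setting to zero all entries P_{ij} with |i−j| > m. Then ‖P − P^{(m)}‖_F ≤ (C/√α)·√n·e^{−αm}. -/

import Mathlib

/-- If `|P i j| ≤ C e^{-α|i-j|}` for all `i, j`, and `P⁽ᵐ⁾` is obtained from
`P` by zeroing all entries with `|i-j| > m`, then `‖P - P⁽ᵐ⁾‖_F ≤ (C/√α)·√n·e^{-αm}`. -/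
theorem frobenius_banded_truncation {n : ℕ} (P : Matrix (Fin n) (Fin n) ℝ)
    (C α : ℝ) (hC : 0 < C) (hα : 0 < α)
    (hdecay : ∀ i j : Fin n, |P i j| ≤ C * Real.exp (-α * |(i : ℤ) - (j : ℤ)|))
    (m : ℕ) (Pm : Matrix (Fin n) (Fin n) ℝ)
    (hPm : Pm = Matrix.of fun i j : Fin n =>
      if |(i : ℤ) - (j : ℤ)| ≤ (m : ℤ) then P i j else 0) :
    Real.sqrt (∑ i, ∑ j, (P i j - Pm i j) ^ 2) ≤
      C / Real.sqrt α * Real.sqrt n * Real.exp (-α * m) := by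
  classical
  subst hPm
  set r : ℝ := Real.exp (-(2 * α)) with hr
  have hr0 : (0:ℝ) < r := Real.exp_pos _
  have hr1 : r < 1 := by
    rw [hr, Real.exp_lt_one_iff]; linarith
  have hsub : (0:ℝ) < 1 - r := by linarith
  -- key product inequality: (2α+1) r ≤ 1
  have hkey : (2 * α + 1) * r ≤ 1 := by
    have h1 : 2 * α + 1 ≤ Real.exp (2 * α) := Real.add_one_le_exp _
    have h2 : Real.exp (2 * α) * r = 1 := by
      rw [hr, ← Real.exp_add]; simp
    nlinarith [Real.exp_pos (2 * α)]
  -- the natAbs distance function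
  have habsd : ∀ i j : Fin n,
      ((|(i:ℤ) - (j:ℤ)| : ℤ) : ℝ) = ((((i:ℤ) - (j:ℤ)).natAbs : ℕ) : ℝ) := by
    intro i j
    rw [Nat.cast_natAbs, Int.cast_abs]
  have hexp2 : ∀ k : ℕ, Real.exp (-α * (k:ℝ)) ^ 2 = r ^ k := by
    intro k
    rw [← Real.exp_nat_mul, ← Real.exp_nat_mul]
    congr 1
    push_cast
    ring
  -- fiber cardinality bound
  have hcard : ∀ (i : Fin n) (k : ℕ),
      (Finset.univ.filter (fun j : Fin n => ((i:ℤ) - (j:ℤ)).natAbs = k)).card ≤ 2 := by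
    intro i k
    have hle : (Finset.univ.filter
          (fun j : Fin n => ((i:ℤ) - (j:ℤ)).natAbs = k)).card ≤
        ({(i:ℤ) - k, (i:ℤ) + k} : Finset ℤ).card := by
      apply Finset.card_le_card_of_injOn (fun j : Fin n => (j:ℤ))
      · intro j hj
        simp only [Finset.coe_filter, Finset.mem_coe, Finset.mem_filter, Finset.mem_univ, true_and, Set.mem_setOf_eq] at hj
        have h2 : (i:ℤ) - (j:ℤ) = k ∨ (i:ℤ) - (j:ℤ) = -k := Int.natAbs_eq_iff.mp hj
        simp only [Finset.coe_insert, Finset.coe_singleton, Set.mem_insert_iff, Set.mem_singleton_iff, Finset.mem_coe, Finset.mem_insert, Finset.mem_singleton]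
        omega
      · intro a _ b _ h
        have h' : ((a : ℤ)) = ((b : ℤ)) := h
        exact Fin.ext (by exact_mod_cast h')
    calc (Finset.univ.filter (fun j : Fin n => ((i:ℤ) - (j:ℤ)).natAbs = k)).card
        ≤ ({(i:ℤ) - k, (i:ℤ) + k} : Finset ℤ).card := hle
      _ ≤ 2 := by
        apply le_trans (Finset.card_insert_le _ _)
        simp
  -- geometric tail bound
  have hgeom : ∑ k ∈ Finset.Ico (m+1) n, r ^ k ≤ r ^ m / (2 * α) := by
    have h1 : ∑ k ∈ Finset.Ico (m+1) n, r ^ k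
        = r ^ (m+1) * ∑ k ∈ Finset.range (n - (m+1)), r ^ k := by
      rw [Finset.sum_Ico_eq_sum_range, Finset.mul_sum]
      exact Finset.sum_congr rfl fun k _ => by rw [pow_add]
    have h2 : ∑ k ∈ Finset.range (n - (m+1)), r ^ k ≤ 1 / (1 - r) := by
      rw [geom_sum_eq (ne_of_lt hr1)]
      have heq : (r ^ (n - (m+1)) - 1) / (r - 1) = (1 - r ^ (n - (m+1))) / (1 - r) := by
        rw [← neg_div_neg_eq]; ring_nf
      rw [heq, div_le_div_iff₀ hsub hsub]
      nlinarith [pow_pos hr0 (n - (m+1))]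
    have h3 : r ^ (m+1) * (1 / (1 - r)) ≤ r ^ m / (2 * α) := by
      rw [mul_one_div, div_le_div_iff₀ hsub (by linarith : (0:ℝ) < 2 * α), pow_succ]
      have hrm : (0:ℝ) ≤ r ^ m := (pow_pos hr0 m).le
      nlinarith [mul_le_mul_of_nonneg_left hkey hrm]
    calc ∑ k ∈ Finset.Ico (m+1) n, r ^ k
        = r ^ (m+1) * ∑ k ∈ Finset.range (n - (m+1)), r ^ k := h1
      _ ≤ r ^ (m+1) * (1 / (1 - r)) := by
          apply mul_le_mul_of_nonneg_left h2 (pow_pos hr0 (m+1)).le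
      _ ≤ r ^ m / (2 * α) := h3
  -- inner sum bound
  have key : ∀ i : Fin n,
      ∑ j, (P i j - (Matrix.of fun i j : Fin n =>
        if |(i : ℤ) - (j : ℤ)| ≤ (m : ℤ) then P i j else 0) i j) ^ 2
      ≤ C ^ 2 * r ^ m / α := by
    intro i
    set f : Fin n → ℕ := fun j => ((i:ℤ) - (j:ℤ)).natAbs with hf
    have step1 : ∀ j : Fin n,
        (P i j - (Matrix.of fun i j : Fin n =>
          if |(i : ℤ) - (j : ℤ)| ≤ (m : ℤ) then P i j else 0) i j) ^ 2
        ≤ if (m:ℤ) < |(i:ℤ) - (j:ℤ)| then C ^ 2 * r ^ f j else 0 := by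
      intro j
      simp only [Matrix.of_apply]
      by_cases h : |(i:ℤ) - (j:ℤ)| ≤ (m:ℤ)
      · simp [h, not_lt.mpr h]
      · rw [if_neg h, if_pos (not_le.mp h), sub_zero]
        have hb := hdecay i j
        have hE : Real.exp (-α * ((|(i:ℤ) - (j:ℤ)| : ℤ) : ℝ)) ^ 2 = r ^ f j := by
          rw [habsd i j, hexp2]
        calc P i j ^ 2 = |P i j| ^ 2 := (sq_abs _).symm
          _ ≤ (C * Real.exp (-α * ((|(i:ℤ) - (j:ℤ)| : ℤ) : ℝ))) ^ 2 := by
              apply pow_le_pow_left₀ (abs_nonneg _) hb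
          _ = C ^ 2 * r ^ f j := by rw [mul_pow, hE]
    have himg : (Finset.univ.filter (fun j : Fin n =>
        (m:ℤ) < |(i:ℤ) - (j:ℤ)|)).image f ⊆ Finset.Ico (m+1) n := by
      intro k hk
      simp only [Finset.mem_image, Finset.mem_filter, Finset.mem_univ, true_and] at hk
      obtain ⟨j, hj, hjk⟩ := hk
      simp only [Finset.mem_Ico]
      have hi : (i:ℤ) < n := by exact_mod_cast i.2
      have hjn : (j:ℤ) < n := by exact_mod_cast j.2
      have hjk' : ((i:ℤ) - (j:ℤ)).natAbs = k := hjk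
      rw [Int.abs_eq_natAbs] at hj
      omega
    calc ∑ j, (P i j - (Matrix.of fun i j : Fin n =>
          if |(i : ℤ) - (j : ℤ)| ≤ (m : ℤ) then P i j else 0) i j) ^ 2
        ≤ ∑ j : Fin n, if (m:ℤ) < |(i:ℤ) - (j:ℤ)| then C ^ 2 * r ^ f j else 0 :=
          Finset.sum_le_sum fun j _ => step1 j
      _ = ∑ j ∈ Finset.univ.filter (fun j : Fin n => (m:ℤ) < |(i:ℤ) - (j:ℤ)|),
            C ^ 2 * r ^ f j := (Finset.sum_filter _ _).symm
      _ = ∑ k ∈ (Finset.univ.filter (fun j : Fin n =>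
            (m:ℤ) < |(i:ℤ) - (j:ℤ)|)).image f,
            ((Finset.univ.filter (fun j : Fin n =>
              (m:ℤ) < |(i:ℤ) - (j:ℤ)|)).filter (fun j => f j = k)).card
              • (C ^ 2 * r ^ k) := Finset.sum_comp (fun k => C ^ 2 * r ^ k) f
      _ ≤ ∑ k ∈ (Finset.univ.filter (fun j : Fin n =>
            (m:ℤ) < |(i:ℤ) - (j:ℤ)|)).image f, 2 * (C ^ 2 * r ^ k) := by
          apply Finset.sum_le_sum
          intro k _
          rw [nsmul_eq_mul]
          apply mul_le_mul_of_nonneg_right _ (by positivity)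
          have hsub2 : ((Finset.univ.filter (fun j : Fin n =>
              (m:ℤ) < |(i:ℤ) - (j:ℤ)|)).filter (fun j => f j = k)).card
              ≤ (Finset.univ.filter (fun j : Fin n => f j = k)).card := by
            apply Finset.card_le_card
            intro j hj
            simp only [Finset.mem_filter] at hj ⊢
            exact ⟨Finset.mem_univ _, hj.2⟩
          exact_mod_cast le_trans hsub2 (hcard i k)
      _ ≤ ∑ k ∈ Finset.Ico (m+1) n, 2 * (C ^ 2 * r ^ k) := by
          apply Finset.sum_le_sum_of_subset_of_nonneg himg
          intro k _ _
          positivity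
      _ = 2 * C ^ 2 * ∑ k ∈ Finset.Ico (m+1) n, r ^ k := by
          rw [Finset.mul_sum]; exact Finset.sum_congr rfl fun k _ => by ring
      _ ≤ 2 * C ^ 2 * (r ^ m / (2 * α)) := by
          apply mul_le_mul_of_nonneg_left hgeom (by positivity)
      _ = C ^ 2 * r ^ m / α := by field_simp
  -- assemble
  have hRHS : 0 ≤ C / Real.sqrt α * Real.sqrt n * Real.exp (-α * m) := by positivity
  rw [← Real.sqrt_sq hRHS]
  apply Real.sqrt_le_sqrt
  have h1 : Real.sqrt α ^ 2 = α := Real.sq_sqrt hα.le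
  have h2 : Real.sqrt n ^ 2 = (n:ℝ) := Real.sq_sqrt (Nat.cast_nonneg n)
  have h3 : Real.exp (-α * (m:ℝ)) ^ 2 = r ^ m := hexp2 m
  calc ∑ i, ∑ j, (P i j - (Matrix.of fun i j : Fin n =>
        if |(i : ℤ) - (j : ℤ)| ≤ (m : ℤ) then P i j else 0) i j) ^ 2
      ≤ ∑ _i : Fin n, C ^ 2 * r ^ m / α := Finset.sum_le_sum fun i _ => key i
    _ = (n:ℝ) * (C ^ 2 * r ^ m / α) := by
        rw [Finset.sum_const, Finset.card_univ, Fintype.card_fin, nsmul_eq_mul]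
    _ = (C / Real.sqrt α * Real.sqrt n * Real.exp (-α * m)) ^ 2 := by
        rw [mul_pow, mul_pow, div_pow, h1, h2, h3]
        ring
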